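/- Let N ≥ 1, 1 < p < 2 and 0 < ν ≤ C, and let Ψ : ℝ^N → ℝ be of class C¹ on ℝ^N, of class C² on ℝ^N \ {0}, and satisfying the sandwich condition for Ψ_{p,0} with constants ν, C. Then for all η, ξ ∈ ℝ^N, the function t ↦ (1 − t) Ψ''(η + t(ξ − η))[ξ − η]², which is defined for almost every t ∈ (0,1) (namely whenever η + t(ξ − η) ≠ 0), is Lebesgue integrable on (0,1) and Ψ(ξ) − Ψ(η) − ∇Ψ(η)·(ξ − η) = ∫₀¹ (1 − t) Ψ''(η + t(ξ − η))[ξ − η]² dt. -/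

import Mathlib

open Filter Topology

/-- The function `Ψ_{p,κ}(ξ) = (1/p) * ((κ² + |ξ|²)^(p/2) - κ^p)`. -/
noncomputable def PsiPK (N : ℕ) (p κ : ℝ) (ξ : EuclideanSpace ℝ (Fin N)) : ℝ :=
  (1 / p) * ((κ ^ 2 + ‖ξ‖ ^ 2) ^ (p / 2) - κ ^ p)

/-- `Ψ` satisfies the sandwich condition for `Ψ_{p,κ}` with constants `ν ≤ C`:
both `Ψ - ν Ψ_{p,κ}` and `C Ψ_{p,κ} - Ψ` are convex. -/
def SandwichCond (N : ℕ) (p κ ν C : ℝ) (Ψ : EuclideanSpace ℝ (Fin N) → ℝ) : Prop :=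
  ConvexOn ℝ Set.univ (fun ξ => Ψ ξ - ν * PsiPK N p κ ξ) ∧
    ConvexOn ℝ Set.univ (fun ξ => C * PsiPK N p κ ξ - Ψ ξ)

/-- A monotone real function has nonnegative derivative wherever it is differentiable. -/
lemma monotone_hasDerivAt_nonneg {f : ℝ → ℝ} (hf : Monotone f) {d t : ℝ}
    (hd : HasDerivAt f d t) : 0 ≤ d := by
  have h1 : Tendsto (slope f t) (𝓝[≠] t) (𝓝 d) := hasDerivAt_iff_tendsto_slope.mp hd
  refine ge_of_tendsto h1 ?_
  filter_upwards [self_mem_nhdsWithin] with s hs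
  have hs' : s ≠ t := hs
  rcases lt_or_gt_of_ne hs' with h | h
  · rw [slope_comm, slope_def_field]
    exact div_nonneg (sub_nonneg.2 (hf h.le)) (sub_nonneg.2 h.le)
  · rw [slope_def_field]
    exact div_nonneg (sub_nonneg.2 (hf h.le)) (sub_nonneg.2 h.le)

/-- Let `1 < p < 2` and let `Ψ` be `C¹` on `ℝᴺ`, `C²` away from the
origin, satisfying the sandwich condition for `Ψ_{p,0}`.  Then for all `η, ξ` the
function `t ↦ (1-t) Ψ''(η + t(ξ-η))[ξ-η]²` is integrable on `(0,1)` and the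
second-order Taylor formula with integral remainder holds:
`Ψ(ξ) - Ψ(η) - ∇Ψ(η)·(ξ-η) = ∫₀¹ (1-t) Ψ''(η + t(ξ-η))[ξ-η]² dt`. -/
theorem stmt_15 (N : ℕ) (hN : 1 ≤ N) (p ν C : ℝ) (hp : 1 < p) (hp2 : p < 2)
    (hν : 0 < ν) (hνC : ν ≤ C)
    (Ψ : EuclideanSpace ℝ (Fin N) → ℝ) (hΨ1 : ContDiff ℝ 1 Ψ)
    (hΨ2 : ContDiffOn ℝ 2 Ψ {(0 : EuclideanSpace ℝ (Fin N))}ᶜ)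
    (hsand : SandwichCond N p 0 ν C Ψ) :
    ∀ η ξ : EuclideanSpace ℝ (Fin N),
      IntervalIntegrable
        (fun t : ℝ =>
          (1 - t) * ((fderiv ℝ (fderiv ℝ Ψ) (η + t • (ξ - η)) (ξ - η)) (ξ - η)))
        MeasureTheory.volume 0 1 ∧
      Ψ ξ - Ψ η - fderiv ℝ Ψ η (ξ - η) =
        ∫ t in (0 : ℝ)..1,
          (1 - t) * ((fderiv ℝ (fderiv ℝ Ψ) (η + t • (ξ - η)) (ξ - η)) (ξ - η)) := by
  intro η ξ
  have hp0 : (0:ℝ) < p := lt_trans one_pos hp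
  set v : EuclideanSpace ℝ (Fin N) := ξ - η with hvdef
  by_cases hv0 : v = 0
  · have hξ : ξ = η := by
      have : ξ - η = 0 := by rw [← hvdef]; exact hv0
      exact sub_eq_zero.mp this
    constructor
    · simp [hv0]
    · simp [hv0, hξ]
  -- main case
  -- Preliminary facts about `Ψ`
  have hΨd : Differentiable ℝ Ψ := hΨ1.differentiable one_ne_zero
  have hc : ∀ t : ℝ, HasDerivAt (fun s : ℝ => η + s • v) v t := by
    intro t
    simpa using ((hasDerivAt_id t).smul_const v).const_add η
  have hg : ∀ t : ℝ, HasDerivAt (fun s : ℝ => Ψ (η + s • v))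
      ((fderiv ℝ Ψ (η + t • v)) v) t :=
    fun t => (hΨd (η + t • v)).hasFDerivAt.comp_hasDerivAt t (hc t)
  have hfc : Continuous fun t : ℝ => (fderiv ℝ Ψ (η + t • v)) v := by
    have h1 : Continuous fun t : ℝ => fderiv ℝ Ψ (η + t • v) :=
      (hΨ1.continuous_fderiv one_ne_zero).comp (continuous_const.add (continuous_id.smul continuous_const))
    exact h1.clm_apply continuous_const
  have hf' : ∀ t : ℝ, η + t • v ≠ 0 →
      HasDerivAt (fun s : ℝ => (fderiv ℝ Ψ (η + s • v)) v)
        ((fderiv ℝ (fderiv ℝ Ψ) (η + t • v) v) v) t := by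
    intro t ht
    have h2 : ContDiffAt ℝ 2 Ψ (η + t • v) :=
      hΨ2.contDiffAt (isOpen_compl_singleton.mem_nhds ht)
    have h3 : ContDiffAt ℝ 1 (fderiv ℝ Ψ) (η + t • v) := h2.fderiv_right (by norm_num)
    have h4 : HasDerivAt (fun s : ℝ => fderiv ℝ Ψ (η + s • v))
        (fderiv ℝ (fderiv ℝ Ψ) (η + t • v) v) t :=
      (h3.differentiableAt one_ne_zero).hasFDerivAt.comp_hasDerivAt t (hc t)
    simpa using h4.clm_apply (hasDerivAt_const t v)
  -- Convexity of Ψ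
  have hPsi0 : ∀ x : EuclideanSpace ℝ (Fin N), PsiPK N p 0 x = (1/p) * ‖x‖ ^ p := by
    intro x
    have h5 : (‖x‖^2 : ℝ) ^ (p/2) = ‖x‖ ^ p := by
      rw [← Real.rpow_natCast ‖x‖ 2, ← Real.rpow_mul (norm_nonneg x)]
      congr 1
      push_cast
      ring
    simp [PsiPK, h5, Real.zero_rpow hp0.ne']
  have h1 : ConvexOn ℝ Set.univ (fun x : EuclideanSpace ℝ (Fin N) => ‖x‖ ^ p) := by
    refine ⟨convex_univ, fun x _ y _ a b ha hb hab => ?_⟩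
    have step1 : ‖a • x + b • y‖ ^ p ≤ (a * ‖x‖ + b * ‖y‖) ^ p := by
      apply Real.rpow_le_rpow (norm_nonneg _) ?_ hp0.le
      calc ‖a • x + b • y‖ ≤ ‖a • x‖ + ‖b • y‖ := norm_add_le _ _
        _ = a * ‖x‖ + b * ‖y‖ := by
            rw [norm_smul, norm_smul, Real.norm_of_nonneg ha, Real.norm_of_nonneg hb]
    have step2 := (convexOn_rpow hp.le).2 (Set.mem_Ici.2 (norm_nonneg x))
      (Set.mem_Ici.2 (norm_nonneg y)) ha hb hab
    simp only [smul_eq_mul] at step2 ⊢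
    exact step1.trans step2
  have hPcx : ConvexOn ℝ Set.univ (fun x : EuclideanSpace ℝ (Fin N) => ν * PsiPK N p 0 x) := by
    have h2 := h1.smul (c := ν * (1/p)) (by positivity)
    have he : (fun x : EuclideanSpace ℝ (Fin N) => ν * PsiPK N p 0 x) = (ν * (1/p)) • (fun x : EuclideanSpace ℝ (Fin N) => ‖x‖ ^ p) := by
      funext x
      rw [hPsi0 x]
      simp only [Pi.smul_apply, smul_eq_mul]
      ring
    rw [he]
    exact h2
  have hΨcx : ConvexOn ℝ Set.univ Ψ := by
    have h3 := hsand.1.add hPcx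
    have he : (fun x : EuclideanSpace ℝ (Fin N) => Ψ x - ν * PsiPK N p 0 x) + (fun x : EuclideanSpace ℝ (Fin N) => ν * PsiPK N p 0 x) = Ψ := by
      funext x
      simp only [Pi.add_apply]
      ring
    rwa [he] at h3
  -- Convexity of the restriction to the segment, monotone derivative
  have hgcx : ConvexOn ℝ Set.univ (fun t : ℝ => Ψ (η + t • v)) := by
    have h4 := hΨcx.comp_affineMap (AffineMap.lineMap η (η + v) : ℝ →ᵃ[ℝ] EuclideanSpace ℝ (Fin N))
    have he : (Ψ ∘ (AffineMap.lineMap η (η + v) : ℝ →ᵃ[ℝ] EuclideanSpace ℝ (Fin N))) = fun t : ℝ => Ψ (η + t • v) := by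
      funext t
      simp only [Function.comp_apply, AffineMap.lineMap_apply, vadd_eq_add, vsub_eq_sub,
        add_sub_cancel_left]
      exact congrArg Ψ (add_comm _ _)
    rw [he] at h4
    simpa using h4
  have hmono : Monotone (fun t : ℝ => (fderiv ℝ Ψ (η + t • v)) v) := by
    have hd : ∀ t : ℝ, DifferentiableAt ℝ (fun s : ℝ => Ψ (η + s • v)) t :=
      fun t => (hg t).differentiableAt
    have hm := hgcx.monotoneOn_deriv (fun x _ => hd x)
    rw [monotoneOn_univ] at hm
    have he : deriv (fun s : ℝ => Ψ (η + s • v)) = fun t : ℝ => (fderiv ℝ Ψ (η + t • v)) v :=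
      funext fun t => (hg t).deriv
    rwa [he] at hm
  -- The auxiliary function `F` and its derivative
  have hF : ∀ t : ℝ, η + t • v ≠ 0 →
      HasDerivAt (fun s : ℝ => (1 - s) * (fderiv ℝ Ψ (η + s • v)) v + Ψ (η + s • v))
        ((1 - t) * ((fderiv ℝ (fderiv ℝ Ψ) (η + t • v) v) v)) t := by
    intro t ht
    have h1' : HasDerivAt (fun s : ℝ => (1 - s)) (-1) t := by
      simpa using (hasDerivAt_id t).const_sub 1
    have h2' := (h1'.mul (hf' t ht)).add (hg t)
    exact h2'.congr_deriv (by ring)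
  have hFcont : Continuous fun s : ℝ => (1 - s) * (fderiv ℝ Ψ (η + s • v)) v + Ψ (η + s • v) :=
    ((continuous_const.sub continuous_id).mul hfc).add (hΨ1.continuous.comp (continuous_const.add (continuous_id.smul continuous_const)))
  have hpos : ∀ t ∈ Set.Ioo (0:ℝ) 1, η + t • v ≠ 0 →
      0 ≤ (1 - t) * ((fderiv ℝ (fderiv ℝ Ψ) (η + t • v) v) v) := by
    intro t ht hne
    have h0 : 0 ≤ (fderiv ℝ (fderiv ℝ Ψ) (η + t • v) v) v :=
      monotone_hasDerivAt_nonneg hmono (hf' t hne)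
    have h1' : (0:ℝ) ≤ 1 - t := by linarith [ht.2]
    exact mul_nonneg h1' h0
  -- choose a splitting point `m`
  have hkey : ∃ m : ℝ, m ∈ Set.Ioo (0:ℝ) 1 ∧
      ∀ t ∈ Set.Ioo (0:ℝ) 1, t ≠ m → η + t • v ≠ 0 := by
    by_cases hex : ∃ t₀ ∈ Set.Ioo (0:ℝ) 1, η + t₀ • v = 0
    · obtain ⟨t₀, ht₀, hz⟩ := hex
      refine ⟨t₀, ht₀, fun t _ htne hcon => htne ?_⟩
      have h1' : η + t • v = η + t₀ • v := hcon.trans hz.symm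
      have h2' : (t - t₀) • v = 0 := by
        rw [sub_smul, sub_eq_zero]
        exact add_left_cancel h1'
      rcases smul_eq_zero.mp h2' with h | h
      · exact sub_eq_zero.mp h
      · exact absurd h hv0
    · push_neg at hex
      exact ⟨1/2, by norm_num, fun t ht _ => hex t ht⟩
  obtain ⟨m, hm, hne⟩ := hkey
  -- integrability on the two halves
  have int1 : IntervalIntegrable
      (fun t : ℝ => (1 - t) * ((fderiv ℝ (fderiv ℝ Ψ) (η + t • v) v) v))
      MeasureTheory.volume 0 m := by
    apply intervalIntegral.intervalIntegrable_deriv_of_nonneg hFcont.continuousOn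
    · intro x hx
      rw [min_eq_left hm.1.le, max_eq_right hm.1.le] at hx
      exact hF x (hne x ⟨hx.1, hx.2.trans hm.2⟩ hx.2.ne)
    · intro x hx
      rw [min_eq_left hm.1.le, max_eq_right hm.1.le] at hx
      exact hpos x ⟨hx.1, hx.2.trans hm.2⟩ (hne x ⟨hx.1, hx.2.trans hm.2⟩ hx.2.ne)
  have int2 : IntervalIntegrable
      (fun t : ℝ => (1 - t) * ((fderiv ℝ (fderiv ℝ Ψ) (η + t • v) v) v))
      MeasureTheory.volume m 1 := by
    apply intervalIntegral.intervalIntegrable_deriv_of_nonneg hFcont.continuousOn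
    · intro x hx
      rw [min_eq_left hm.2.le, max_eq_right hm.2.le] at hx
      exact hF x (hne x ⟨hm.1.trans hx.1, hx.2⟩ hx.1.ne')
    · intro x hx
      rw [min_eq_left hm.2.le, max_eq_right hm.2.le] at hx
      exact hpos x ⟨hm.1.trans hx.1, hx.2⟩ (hne x ⟨hm.1.trans hx.1, hx.2⟩ hx.1.ne')
  have intAll := int1.trans int2
  refine ⟨intAll, ?_⟩
  -- fundamental theorem of calculus on the two halves
  have e1 : ∫ t in (0:ℝ)..m, (1 - t) * ((fderiv ℝ (fderiv ℝ Ψ) (η + t • v) v) v) =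
      ((1 - m) * (fderiv ℝ Ψ (η + m • v)) v + Ψ (η + m • v)) -
      ((1 - 0) * (fderiv ℝ Ψ (η + (0:ℝ) • v)) v + Ψ (η + (0:ℝ) • v)) := by
    exact intervalIntegral.integral_eq_sub_of_hasDeriv_right_of_le hm.1.le
      hFcont.continuousOn
      (fun x hx => (hF x (hne x ⟨hx.1, hx.2.trans hm.2⟩ hx.2.ne)).hasDerivWithinAt) int1
  have e2 : ∫ t in m..(1:ℝ), (1 - t) * ((fderiv ℝ (fderiv ℝ Ψ) (η + t • v) v) v) =
      ((1 - 1) * (fderiv ℝ Ψ (η + (1:ℝ) • v)) v + Ψ (η + (1:ℝ) • v)) -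
      ((1 - m) * (fderiv ℝ Ψ (η + m • v)) v + Ψ (η + m • v)) := by
    exact intervalIntegral.integral_eq_sub_of_hasDeriv_right_of_le hm.2.le
      hFcont.continuousOn
      (fun x hx => (hF x (hne x ⟨hm.1.trans hx.1, hx.2⟩ hx.1.ne')).hasDerivWithinAt) int2
  have e3 := intervalIntegral.integral_add_adjacent_intervals int1 int2
  rw [← e3, e1, e2]
  have hv1 : η + (1:ℝ) • v = ξ := by rw [one_smul, hvdef]; abel
  have hv00 : η + (0:ℝ) • v = η := by rw [zero_smul, add_zero]
  rw [hv1, hv00]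
  ring
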